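/- arXiv:2004.01741 — 3 statements merged into one kernel-verified Lean document; each statement's English description precedes it below -/
import Mathlib

section
/- If n is even, then the Boolean nearest neighbor complexity of the n-variable majority function satisfies BNN(MAJₙ) ≤ n/2 + 2. -/
open Finset

noncomputable section

noncomputable instance {n : ℕ} : DecidableEq (EuclideanSpace ℝ (Fin n)) :=
  fun _ _ => Classical.propDecidable _

/-- The embedding of a Boolean value into `ℝ`. -/
def boolToR (b : Bool) : ℝ := if b then 1 else 0

/-- The embedding of a Boolean vector into Euclidean space `ℝ^n`. -/
def toPoint {n : ℕ} (a : Fin n → Bool) : EuclideanSpace ℝ (Fin n) :=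
  WithLp.toLp 2 (fun i => boolToR (a i))

/-- `(P, N)` is a nearest neighbor representation of the Boolean function `f`:
`P` and `N` are disjoint finite sets of points of `ℝ^n` such that for every Boolean
vector `a`, if `f a = 1` then some `b ∈ P` is strictly closer to `a` than every `c ∈ N`,
and if `f a = 0` then some `b ∈ N` is strictly closer to `a` than every `c ∈ P`. -/
def IsNNRep {n : ℕ} (f : (Fin n → Bool) → Bool)
    (P N : Finset (EuclideanSpace ℝ (Fin n))) : Prop :=
  Disjoint P N ∧
  ∀ a : Fin n → Bool,
    (f a = true → ∃ b ∈ P, ∀ c ∈ N, dist (toPoint a) b < dist (toPoint a) c) ∧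
    (f a = false → ∃ b ∈ N, ∀ c ∈ P, dist (toPoint a) b < dist (toPoint a) c)

/-- The nearest neighbor complexity of `f`: the minimum size `|P ∪ N|` of a nearest
neighbor representation `(P, N)` of `f`. -/
def NN {n : ℕ} (f : (Fin n → Bool) → Bool) : ℕ :=
  sInf {m | ∃ P N, IsNNRep f P N ∧ (P ∪ N).card = m}

/-- A point of `ℝ^n` is Boolean if all of its coordinates are `0` or `1`. -/
def IsBooleanPoint {n : ℕ} (p : EuclideanSpace ℝ (Fin n)) : Prop :=
  ∀ i, p i = 0 ∨ p i = 1

/-- The Boolean nearest neighbor complexity of `f`: the minimum size `|P ∪ N|` of a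
nearest neighbor representation of `f` all of whose prototypes are Boolean points. -/
def BNN {n : ℕ} (f : (Fin n → Bool) → Bool) : ℕ :=
  sInf {m | ∃ P N, IsNNRep f P N ∧ (∀ p ∈ P ∪ N, IsBooleanPoint p) ∧ (P ∪ N).card = m}

/-- The weight (number of `1` components) of a Boolean vector. -/
def wt {n : ℕ} (x : Fin n → Bool) : ℕ := (Finset.univ.filter fun i => x i = true).card

/-- The majority function `MAJ_n`, with value `1` iff `x₁ + ⋯ + xₙ ≥ n / 2`. -/
def MAJ (n : ℕ) (x : Fin n → Bool) : Bool := decide (n ≤ 2 * wt x)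

def Dd {n : ℕ} (a b : Fin n → Bool) : ℝ := ∑ j, if a j = b j then (0:ℝ) else 1
lemma Dd_nonneg {n : ℕ} (a b : Fin n → Bool) : 0 ≤ Dd a b := by
  apply Finset.sum_nonneg; intro j _; split <;> norm_num
lemma dist_toPoint_eq {n : ℕ} (a b : Fin n → Bool) :
    dist (toPoint a) (toPoint b) = Real.sqrt (Dd a b) := by
  rw [EuclideanSpace.dist_eq, Dd]
  congr 1
  apply Finset.sum_congr rfl
  intro j _
  show dist (boolToR (a j)) (boolToR (b j)) ^ 2 = _
  rw [Real.dist_eq, sq_abs]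
  cases h1 : a j <;> cases h2 : b j <;> simp [boolToR]
lemma dist_lt_of_Dd {n : ℕ} (a b c : Fin n → Bool) (h : Dd a b < Dd a c) :
    dist (toPoint a) (toPoint b) < dist (toPoint a) (toPoint c) := by
  rw [dist_toPoint_eq, dist_toPoint_eq]
  exact Real.sqrt_lt_sqrt (Dd_nonneg a b) h
lemma sum_boolToR {n : ℕ} (a : Fin n → Bool) : ∑ j, boolToR (a j) = (wt a : ℝ) := by
  rw [wt, Finset.card_filter]
  push_cast
  apply Finset.sum_congr rfl
  intro j _
  cases h : a j <;> simp [boolToR]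
lemma Dd_zero {n : ℕ} (a : Fin n → Bool) : Dd a (fun _ => false) = (wt a : ℝ) := by
  rw [Dd, ← sum_boolToR]
  apply Finset.sum_congr rfl
  intro j _
  cases h : a j <;> simp [boolToR]
lemma Dd_q {n : ℕ} (a : Fin n → Bool) (i : Fin n) :
    Dd a (fun j => decide (j ≠ i)) = (n : ℝ) - 1 - (wt a : ℝ) + 2 * boolToR (a i) := by
  rw [Dd, ← Finset.sum_erase_add _ _ (Finset.mem_univ i)]
  have h1 : (if a i = decide (i ≠ i) then (0:ℝ) else 1) = boolToR (a i) := by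
    cases h : a i <;> simp [boolToR]
  have h2 : ∑ j ∈ Finset.univ.erase i, (if a j = decide (j ≠ i) then (0:ℝ) else 1)
      = ∑ j ∈ Finset.univ.erase i, (1 - boolToR (a j)) := by
    apply Finset.sum_congr rfl
    intro j hj
    have hji : j ≠ i := Finset.ne_of_mem_erase hj
    cases h : a j <;> simp [boolToR, hji]
  have h3 : ∑ j ∈ Finset.univ.erase i, boolToR (a j) = (wt a : ℝ) - boolToR (a i) := by
    have := Finset.sum_erase_add Finset.univ (fun j => boolToR (a j)) (Finset.mem_univ i)
    rw [sum_boolToR] at this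
    linarith
  rw [h1, h2, Finset.sum_sub_distrib, Finset.sum_const, h3,
    Finset.card_erase_of_mem (Finset.mem_univ i), Finset.card_univ, Fintype.card_fin]
  have hn : 1 ≤ n := i.pos
  have : ((n - 1 : ℕ) : ℝ) = (n : ℝ) - 1 := by
    push_cast [Nat.cast_sub hn]; ring
  rw [nsmul_eq_mul, this]
  ring
lemma toPoint_boolean {n : ℕ} (a : Fin n → Bool) : IsBooleanPoint (toPoint a) := by
  intro i; cases h : a i <;> simp [toPoint, boolToR, h]
lemma boolToR_le_one (b : Bool) : boolToR b ≤ 1 := by cases b <;> simp [boolToR]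
lemma boolToR_nonneg (b : Bool) : 0 ≤ boolToR b := by cases b <;> simp [boolToR]
lemma wt_le {n : ℕ} (a : Fin n → Bool) : wt a ≤ n := by
  rw [wt]
  calc (Finset.univ.filter fun i => a i = true).card ≤ Finset.univ.card :=
        Finset.card_filter_le _ _
  _ = n := by simp


/-- If `n` is even, then the Boolean nearest neighbor complexity of the
`n`-variable majority function satisfies `BNN(MAJₙ) ≤ n / 2 + 2`. -/
theorem BNN_majority_even (n : ℕ) (hn : Even n) : BNN (MAJ n) ≤ n / 2 + 2 := by
  rcases Nat.eq_zero_or_pos n with h0 | hpos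
  · subst h0
    have hmem : (1 : ℕ) ∈ {m | ∃ P N, IsNNRep (MAJ 0) P N ∧
        (∀ p ∈ P ∪ N, IsBooleanPoint p) ∧ (P ∪ N).card = m} := by
      refine ⟨{toPoint (fun _ => false)}, ∅, ⟨Finset.disjoint_empty_right _, ?_⟩, ?_, ?_⟩
      · intro a
        constructor
        · intro _
          exact ⟨toPoint (fun _ => false), Finset.mem_singleton_self _,
            fun c hc => absurd hc (Finset.notMem_empty c)⟩
        · intro hfa
          simp [MAJ] at hfa
      · intro p hp
        simp only [Finset.union_empty, Finset.mem_singleton] at hp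
        subst hp
        exact toPoint_boolean _
      · simp
    exact le_trans (Nat.sInf_le hmem) (by norm_num)
  · obtain ⟨k, hk⟩ := hn
    have hn2k : n = 2 * k := by omega
    have hkpos : 1 ≤ k := by omega
    have hkn : k < n := by omega
    set z : Fin n → Bool := fun _ => false with hz
    set q : Fin n → (Fin n → Bool) := fun i j => decide (j ≠ i) with hq
    set S : Finset (Fin n) := Finset.univ.filter (fun i : Fin n => i.val ≤ k) with hS
    set P : Finset (EuclideanSpace ℝ (Fin n)) := S.image (fun i => toPoint (q i)) with hP
    set N : Finset (EuclideanSpace ℝ (Fin n)) := {toPoint z} with hN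
    have hScard_le : S.card ≤ k + 1 := by
      have hsub : S.image (fun i : Fin n => i.val) ⊆ Finset.range (k + 1) := by
        intro m hm
        simp only [hS, Finset.mem_image, Finset.mem_filter, Finset.mem_univ, true_and] at hm
        obtain ⟨i, hi, rfl⟩ := hm
        simp only [Finset.mem_range]
        omega
      calc S.card = (S.image (fun i : Fin n => i.val)).card :=
            (Finset.card_image_of_injective _ Fin.val_injective).symm
        _ ≤ (Finset.range (k + 1)).card := Finset.card_le_card hsub
        _ = k + 1 := Finset.card_range _
    have hScard_ge : k + 1 ≤ S.card := by
      have hle : k + 1 ≤ n := by omega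
      have hsub : (Finset.univ.image (Fin.castLE hle) : Finset (Fin n)) ⊆ S := by
        intro i hi
        simp only [Finset.mem_image, Finset.mem_univ, true_and] at hi
        obtain ⟨m, rfl⟩ := hi
        simp only [hS, Finset.mem_filter, Finset.mem_univ, true_and, Fin.coe_castLE]
        omega
      calc k + 1 = (Finset.univ : Finset (Fin (k + 1))).card := by simp
        _ = (Finset.univ.image (Fin.castLE hle)).card :=
            (Finset.card_image_of_injective _ (Fin.castLE_injective hle)).symm
        _ ≤ S.card := Finset.card_le_card hsub
    -- two convenient real facts
    have hnR : (n : ℝ) = 2 * k := by exact_mod_cast congrArg Nat.cast hn2k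
    -- the representation is valid
    have hrep : IsNNRep (MAJ n) P N := by
      constructor
      · -- disjoint
        rw [Finset.disjoint_right]
        intro p hpN hpP
        rw [hN, Finset.mem_singleton] at hpN
        rw [hP, Finset.mem_image] at hpP
        obtain ⟨i, _, hqi⟩ := hpP
        -- find j ≠ i
        have : Nontrivial (Fin n) := Fin.nontrivial_iff_two_le.mpr (by omega)
        obtain ⟨j, hj⟩ := exists_ne i
        have hji : q i j = true := by simp [hq, hj]
        have h1 : boolToR (q i j) = boolToR (z j) := congrArg (fun v : EuclideanSpace ℝ (Fin n) => v j) (hqi.trans hpN)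
        rw [hji, hz] at h1
        simp [boolToR] at h1
      · intro a
        have hwle : wt a ≤ n := wt_le a
        constructor
        · -- positive points
          intro hmaj
          simp only [MAJ, decide_eq_true_eq] at hmaj
          have hwk : k ≤ wt a := by omega
          -- choose a good index i
          have : ∃ i ∈ S, (k + 1 ≤ wt a ∨ a i = false) := by
            rcases Nat.lt_or_ge (wt a) (k + 1) with hlt | hge
            · -- wt a = k ; find i ∈ S with a i = false
              have hweq : wt a = k := by omega
              have hnotsub : ¬ S ⊆ Finset.univ.filter (fun i => a i = true) := by
                intro hsub
                have := Finset.card_le_card hsub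
                rw [← wt, hweq] at this
                omega
              obtain ⟨i, hiS, hiT⟩ := Finset.not_subset.mp hnotsub
              refine ⟨i, hiS, Or.inr ?_⟩
              simp only [Finset.mem_filter, Finset.mem_univ, true_and] at hiT
              simpa using hiT
            · refine ⟨⟨0, hpos⟩, ?_, Or.inl hge⟩
              simp only [hS, Finset.mem_filter, Finset.mem_univ, true_and]
              omega
          obtain ⟨i, hiS, hgood⟩ := this
          refine ⟨toPoint (q i), Finset.mem_image_of_mem _ hiS, ?_⟩
          intro c hc
          rw [hN, Finset.mem_singleton] at hc
          subst hc
          apply dist_lt_of_Dd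
          rw [Dd_zero]
          have hDq : Dd a (q i) = (n : ℝ) - 1 - (wt a : ℝ) + 2 * boolToR (a i) := Dd_q a i
          rw [hDq, hnR]
          rcases hgood with hge | hfalse
          · have h1 : boolToR (a i) ≤ 1 := boolToR_le_one _
            have h2 : (k : ℝ) + 1 ≤ (wt a : ℝ) := by exact_mod_cast hge
            linarith
          · rw [hfalse]
            have h2 : (k : ℝ) ≤ (wt a : ℝ) := by exact_mod_cast hwk
            simp only [boolToR]
            norm_num
            linarith
        · -- negative points
          intro hmaj
          simp only [MAJ, decide_eq_false_iff_not, not_le] at hmaj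
          have hwk : wt a < k := by omega
          refine ⟨toPoint z, Finset.mem_singleton_self _, ?_⟩
          intro c hc
          rw [hP, Finset.mem_image] at hc
          obtain ⟨i, _, rfl⟩ := hc
          apply dist_lt_of_Dd
          rw [Dd_zero, Dd_q, hnR]
          have h1 : (0:ℝ) ≤ boolToR (a i) := boolToR_nonneg _
          have h2 : (wt a : ℝ) ≤ (k : ℝ) - 1 := by
            have : (wt a : ℝ) + 1 ≤ k := by exact_mod_cast hwk
            linarith
          linarith
    have hmem : (P ∪ N).card ∈ {m | ∃ P N, IsNNRep (MAJ n) P N ∧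
        (∀ p ∈ P ∪ N, IsBooleanPoint p) ∧ (P ∪ N).card = m} := by
      refine ⟨P, N, hrep, ?_, rfl⟩
      intro p hp
      rw [Finset.mem_union] at hp
      rcases hp with hp | hp
      · rw [hP, Finset.mem_image] at hp
        obtain ⟨i, _, rfl⟩ := hp
        exact toPoint_boolean _
      · rw [hN, Finset.mem_singleton] at hp
        subst hp
        exact toPoint_boolean _
    refine le_trans (Nat.sInf_le hmem) ?_
    have hcard : (P ∪ N).card ≤ k + 2 := by
      calc (P ∪ N).card ≤ P.card + N.card := Finset.card_union_le _ _
        _ ≤ (k + 1) + 1 := by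
            have hPcard : P.card ≤ k + 1 := le_trans (Finset.card_image_le) hScard_le
            have hNcard : N.card = 1 := by rw [hN]; simp
            omega
        _ = k + 2 := by ring
    have : n / 2 = k := by omega
    omega
end
end

section
/- Let 1 ≤ t ≤ n and let (P, N) with P, N ⊆ {0,1}^n be a Boolean nearest neighbor representation of the threshold function TH_n^t. If a ∈ {0,1}^n has weight exactly t and p ∈ P is a positive prototype at minimum Hamming distance from a, then a ≤ p in the componentwise partial order. -/
open Finset

noncomputable section

/-- The threshold function `TH_n^t`, with value `1` iff `x₁ + ⋯ + xₙ ≥ t`. -/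
def TH (n t : ℕ) (x : Fin n → Bool) : Bool := decide (t ≤ wt x)

-- Squared distance helper.
def Dsq {n : ℕ} (x : Fin n → Bool) (q : EuclideanSpace ℝ (Fin n)) : ℝ :=
  ∑ j, (boolToR (x j) - q j) ^ 2

lemma Dsq_nonneg {n : ℕ} (x : Fin n → Bool) (q : EuclideanSpace ℝ (Fin n)) :
    0 ≤ Dsq x q :=
  Finset.sum_nonneg fun _ _ => sq_nonneg _

lemma dist_toPoint {n : ℕ} (x : Fin n → Bool) (q : EuclideanSpace ℝ (Fin n)) :
    dist (toPoint x) q = Real.sqrt (Dsq x q) := by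
  rw [EuclideanSpace.dist_eq]
  congr 1
  refine Finset.sum_congr rfl fun j _ => ?_
  rw [Real.dist_eq, sq_abs]
  rfl

lemma dist_lt_iff {n : ℕ} (x : Fin n → Bool) (q r : EuclideanSpace ℝ (Fin n)) :
    dist (toPoint x) q < dist (toPoint x) r ↔ Dsq x q < Dsq x r := by
  rw [dist_toPoint, dist_toPoint, Real.sqrt_lt_sqrt_iff (Dsq_nonneg x q)]

lemma Dsq_update {n : ℕ} (a : Fin n → Bool) (i : Fin n)
    (q : EuclideanSpace ℝ (Fin n)) :
    Dsq (Function.update a i false) q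
      = Dsq a q + ((0 - q i) ^ 2 - (boolToR (a i) - q i) ^ 2) := by
  unfold Dsq
  rw [← Finset.sum_erase_add _ _ (Finset.mem_univ i),
      ← Finset.sum_erase_add (Finset.univ) (fun j => (boolToR (a j) - q j) ^ 2) (Finset.mem_univ i)]
  have h1 : ∑ j ∈ Finset.univ.erase i, (boolToR (Function.update a i false j) - q j) ^ 2
      = ∑ j ∈ Finset.univ.erase i, (boolToR (a j) - q j) ^ 2 := by
    refine Finset.sum_congr rfl fun j hj => ?_
    rw [Function.update_of_ne (Finset.ne_of_mem_erase hj)]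
  rw [h1, Function.update_self]
  simp [boolToR]
  ring

lemma wt_update_false {n : ℕ} (a : Fin n → Bool) (i : Fin n) (hai : a i = true) :
    wt (Function.update a i false) + 1 = wt a := by
  unfold wt
  have : (Finset.univ.filter fun j => a j = true)
      = insert i (Finset.univ.filter fun j => Function.update a i false j = true) := by
    ext j
    by_cases hj : j = i
    · subst hj; simp [hai]
    · simp [hj, Function.update_of_ne hj]
  rw [this, Finset.card_insert_of_notMem (by simp)]

/-- Let `1 ≤ t ≤ n` and let `(P, N)` be a Boolean nearest neighbor
representation of `TH_n^t`. If `a` has weight exactly `t` and `p ∈ P` is a positive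
prototype at minimum distance from `a`, then `a ≤ p` componentwise. -/
theorem closest_positive_prototype_covers (n t : ℕ) (ht1 : 1 ≤ t) (htn : t ≤ n)
    (P N : Finset (EuclideanSpace ℝ (Fin n)))
    (hrep : IsNNRep (TH n t) P N) (hbool : ∀ p ∈ P ∪ N, IsBooleanPoint p)
    (a : Fin n → Bool) (ha : wt a = t)
    (p : EuclideanSpace ℝ (Fin n)) (hp : p ∈ P)
    (hmin : ∀ q ∈ P, dist (toPoint a) p ≤ dist (toPoint a) q) :
    ∀ i : Fin n, a i = true → p i = 1 := by
  intro i hai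
  by_contra hpi
  -- p is Boolean, so p i = 0
  have hpB : IsBooleanPoint p := hbool p (Finset.mem_union_left _ hp)
  have hpi0 : p i = 0 := (hpB i).resolve_right hpi
  -- a has threshold value true
  have hTHa : TH n t a = true := by simp [TH, ha]
  -- a' = a with coordinate i flipped to false
  set a' := Function.update a i false with ha'
  have hwt' : wt a' + 1 = t := by rw [← ha]; exact wt_update_false a i hai
  have hTHa' : TH n t a' = false := by
    simp only [TH, decide_eq_false_iff_not, not_le]
    omega
  obtain ⟨c, hcN, hc⟩ := (hrep.2 a').2 hTHa'
  have hcB : IsBooleanPoint c := hbool c (Finset.mem_union_right _ hcN)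
  -- from the a' representation: Dsq a' c < Dsq a' p
  have h1 : Dsq a' c < Dsq a' p := (dist_lt_iff a' c p).mp (hc p hp)
  -- Dsq a' p = Dsq a p - 1
  have h2 : Dsq a' p = Dsq a p - 1 := by
    rw [Dsq_update a i p, hai, hpi0]
    simp [boolToR]
    ring
  -- Dsq a' c ≥ Dsq a c - 1
  have h3 : Dsq a c - 1 ≤ Dsq a' c := by
    rw [Dsq_update a i c, hai]
    have : (boolToR true - c i) ^ 2 ≤ 1 := by
      rcases hcB i with h | h <;> simp [h, boolToR]
    nlinarith [sq_nonneg (0 - c i)]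
  have hlt : Dsq a c < Dsq a p := by linarith
  -- from the a representation: some b ∈ P with dist a b < dist a c
  obtain ⟨b, hbP, hb⟩ := (hrep.2 a).1 hTHa
  have h4 : dist (toPoint a) p < dist (toPoint a) c :=
    lt_of_le_of_lt (hmin b hbP) (hb c hcN)
  have h5 : Dsq a p < Dsq a c := (dist_lt_iff a p c).mp h4
  linarith
end
end

section
/- Almost all n-variable Boolean functions f satisfy NN(f) > 2^{n/2}/n; that is, the fraction of Boolean functions f : {0,1}^n → {0,1} with NN(f) ≤ 2^{n/2}/n, taken among all 2^{2^n} Boolean functions on n variables, tends to 0 as n → ∞. -/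
open Finset

noncomputable section

/-- An affine functional on `ℝ^d`. -/
def IsAff {d : ℕ} (L : (Fin d → ℝ) → ℝ) : Prop :=
  ∃ (c : ℝ) (w : Fin d → ℝ), ∀ θ, L θ = c + ∑ i, w i * θ i

lemma isAff_const {d : ℕ} (c : ℝ) : IsAff fun _ : Fin d → ℝ => c :=
  ⟨c, fun _ => 0, fun θ => by simp⟩

lemma isAff_coord {d : ℕ} (i : Fin d) : IsAff fun θ : Fin d → ℝ => θ i :=
  ⟨0, fun i' => if i' = i then 1 else 0, fun θ => by
    simp [ite_mul, Finset.sum_ite_eq']⟩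

lemma IsAff.add {d : ℕ} {f g : (Fin d → ℝ) → ℝ} (hf : IsAff f) (hg : IsAff g) :
    IsAff fun θ => f θ + g θ := by
  obtain ⟨c, w, hw⟩ := hf; obtain ⟨c', w', hw'⟩ := hg
  refine ⟨c + c', fun i => w i + w' i, fun θ => ?_⟩
  simp [hw, hw', add_mul, Finset.sum_add_distrib]; ring

lemma IsAff.const_mul {d : ℕ} {f : (Fin d → ℝ) → ℝ} (r : ℝ) (hf : IsAff f) :
    IsAff fun θ => r * f θ := by
  obtain ⟨c, w, hw⟩ := hf
  refine ⟨r * c, fun i => r * w i, fun θ => ?_⟩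
  simp [hw, Finset.mul_sum, mul_add, mul_assoc]

lemma IsAff.sub {d : ℕ} {f g : (Fin d → ℝ) → ℝ} (hf : IsAff f) (hg : IsAff g) :
    IsAff fun θ => f θ - g θ := by
  have := hf.add (hg.const_mul (-1))
  simpa [sub_eq_add_neg] using this

lemma isAff_sum {d : ℕ} {ι : Type*} (s : Finset ι) (f : ι → (Fin d → ℝ) → ℝ)
    (h : ∀ i ∈ s, IsAff (f i)) : IsAff fun θ => ∑ i ∈ s, f i θ := by
  induction s using Finset.cons_induction with
  | empty => simpa using isAff_const (d := d) 0
  | cons a s ha ih =>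
    simp only [Finset.sum_cons]
    exact (h a (Finset.mem_cons_self a s)).add (ih fun i hi => h i (Finset.mem_cons_of_mem hi))

lemma IsAff.segment {d : ℕ} {L : (Fin d → ℝ) → ℝ} (hL : IsAff L) (x y : Fin d → ℝ) (s : ℝ) :
    L (fun i => x i + s * (y i - x i)) = L x + s * (L y - L x) := by
  obtain ⟨c, w, hw⟩ := hL
  simp only [hw]
  have : ∀ i, w i * (x i + s * (y i - x i))
      = w i * x i + (s * (w i * y i) - s * (w i * x i)) := fun i => by ring
  simp only [this, Finset.sum_add_distrib, Finset.sum_sub_distrib, ← Finset.mul_sum]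
  ring

open Classical in
/-- The set of sign patterns realized by a family of functionals. -/
def Pats {d K : ℕ} (L : Fin K → (Fin d → ℝ) → ℝ) : Finset (Fin K → Bool) :=
  Finset.univ.filter fun σ => ∃ θ, ∀ j, (L j θ < 0 ↔ σ j = true)

lemma mem_Pats {d K : ℕ} {L : Fin K → (Fin d → ℝ) → ℝ} {σ : Fin K → Bool} :
    σ ∈ Pats L ↔ ∃ θ, ∀ j, (L j θ < 0 ↔ σ j = true) := by
  classical simp [Pats]

theorem pats_card (d : ℕ) : ∀ (K : ℕ) (L : Fin K → (Fin d → ℝ) → ℝ), (∀ j, IsAff (L j)) →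
    (Pats L).card ≤ (K + 1) ^ d := by
  induction d with
  | zero =>
    intro K L _
    simp only [pow_zero]
    refine Finset.card_le_one.mpr fun σ hσ τ hτ => ?_
    obtain ⟨θσ, hθσ⟩ := mem_Pats.mp hσ
    obtain ⟨θτ, hθτ⟩ := mem_Pats.mp hτ
    have hθ : θσ = θτ := funext fun i => i.elim0
    funext j
    exact Bool.eq_iff_iff.mpr (((hθσ j).symm.trans (hθ ▸ hθτ j)))
  | succ d ihd =>
    intro K
    induction K with
    | zero =>
      intro L _
      have : (Pats L).card ≤ Fintype.card (Fin 0 → Bool) := Finset.card_le_univ _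
      simpa using this.trans (by simp)
    | succ K ihK =>
      intro L hL
      set j₀ : Fin (K + 1) := Fin.last K with hj₀
      obtain ⟨c, w, hw⟩ := hL j₀
      set r : (Fin (K + 1) → Bool) → (Fin K → Bool) := fun σ => σ ∘ Fin.castSucc with hr
      -- front functionals
      set Lf : Fin K → (Fin (d + 1) → ℝ) → ℝ := fun j => L j.castSucc with hLf
      have hLfaff : ∀ j, IsAff (Lf j) := fun j => hL j.castSucc
      have hfront : ∀ (S : Finset (Fin (K+1) → Bool)), S ⊆ Pats L → S.image r ⊆ Pats Lf := by
        intro S hS σ' hσ'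
        obtain ⟨σ, hσ, rfl⟩ := Finset.mem_image.mp hσ'
        obtain ⟨θ, hθ⟩ := mem_Pats.mp (hS hσ)
        exact mem_Pats.mpr ⟨θ, fun j => hθ j.castSucc⟩
      by_cases hw0 : ∀ i, w i = 0
      · -- last functional is constant: restriction to the front is injective on `Pats L`
        have hconst : ∀ θ, L j₀ θ = c := fun θ => by simp [hw, hw0]
        have hinj : Set.InjOn r (Pats L) := by
          intro σ hσ τ hτ hrστ
          obtain ⟨θσ, hθσ⟩ := mem_Pats.mp hσ
          obtain ⟨θτ, hθτ⟩ := mem_Pats.mp hτ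
          funext j
          refine Fin.lastCases ?_ (fun i => congrFun hrστ i) j
          refine Bool.eq_iff_iff.mpr ?_
          rw [← hθσ j₀, ← hθτ j₀, hconst, hconst]
        calc (Pats L).card = ((Pats L).image r).card := (Finset.card_image_of_injOn hinj).symm
          _ ≤ (K + 1) ^ (d + 1) := (Finset.card_le_card (hfront _ (subset_refl _))).trans
              (ihK Lf hLfaff)
          _ ≤ (K + 1 + 1) ^ (d + 1) := Nat.pow_le_pow_left (by omega) _
      · push_neg at hw0
        obtain ⟨i₀, hi₀⟩ := hw0
        -- the substitution onto the hyperplane L j₀ = 0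
        set t : (Fin d → ℝ) → ℝ :=
          fun θ' => (-c - ∑ i, w (i₀.succAbove i) * θ' i) / w i₀ with ht
        set e : (Fin d → ℝ) → (Fin (d + 1) → ℝ) := fun θ' => i₀.insertNth (t θ') θ' with he
        have hsum : ∀ (θ : Fin (d+1) → ℝ),
            ∑ i, w i * θ i = w i₀ * θ i₀ + ∑ i, w (i₀.succAbove i) * θ (i₀.succAbove i) :=
          fun θ => Fin.sum_univ_succAbove (fun i => w i * θ i) i₀
        have heval : ∀ θ', L j₀ (e θ') = 0 := by
          intro θ'
          rw [hw, hsum]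
          simp only [he, Fin.insertNth_apply_same, Fin.insertNth_apply_succAbove]
          rw [ht]
          field_simp
          ring
        have hsect : ∀ θ, L j₀ θ = 0 → e (i₀.removeNth θ) = θ := by
          intro θ hθ
          have ht' : t (i₀.removeNth θ) = θ i₀ := by
            rw [hw, hsum] at hθ
            rw [ht]
            field_simp
            simp only [Fin.removeNth]
            linarith
          show i₀.insertNth (t (i₀.removeNth θ)) (i₀.removeNth θ) = θ
          rw [ht']
          exact Fin.insertNth_self_removeNth i₀ θ
        -- functionals restricted to the hyperplane
        set M : Fin K → (Fin d → ℝ) → ℝ := fun j θ' => Lf j (e θ') with hM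
        have hMaff : ∀ j, IsAff (M j) := by
          intro j
          obtain ⟨cj, wj, hwj⟩ := hLfaff j
          have htaff : IsAff t := by
            have : IsAff fun θ' : Fin d → ℝ => (-c - ∑ i, w (i₀.succAbove i) * θ' i) :=
              (isAff_const (-c)).sub (isAff_sum Finset.univ _
                (fun i _ => (isAff_coord i).const_mul (w (i₀.succAbove i))))
            simpa [ht, div_eq_mul_inv, mul_comm] using this.const_mul (w i₀)⁻¹
          have : IsAff fun θ' => cj + (wj i₀ * t θ' + ∑ i, wj (i₀.succAbove i) * θ' i) :=
            (isAff_const cj).add ((htaff.const_mul (wj i₀)).add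
              (isAff_sum Finset.univ _ fun i _ => (isAff_coord i).const_mul (wj (i₀.succAbove i))))
          convert this using 2 with θ'
          show Lf j (i₀.insertNth (t θ') θ') = _
          rw [hwj, Fin.sum_univ_succAbove _ i₀]
          simp only [Fin.insertNth_apply_same, Fin.insertNth_apply_succAbove]
        -- split patterns by the last sign
        classical
        set S := Pats L with hS
        set S₁ := S.filter (fun σ => σ j₀ = true) with hS₁
        set S₂ := S.filter (fun σ => σ j₀ = false) with hS₂
        have hsplit : S.card = S₁.card + S₂.card := by
          rw [hS₁, hS₂]
          rw [← Finset.card_filter_add_card_filter_not (fun σ => σ j₀ = true)]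
          congr 1
          apply Finset.card_bij (fun σ _ => σ)
          · intro σ hσ; simp only [Finset.mem_filter] at hσ ⊢; exact ⟨hσ.1, by simpa using hσ.2⟩
          · intro a _ b _ h; exact h
          · intro σ hσ; simp only [Finset.mem_filter] at hσ; exact ⟨σ, by simp [hσ.1, hσ.2], rfl⟩
        have hinj₁ : Set.InjOn r S₁ := by
          intro σ hσ τ hτ hrστ
          simp only [hS₁, Finset.mem_filter, Finset.coe_filter, Set.mem_setOf_eq] at hσ hτ
          funext j
          refine Fin.lastCases ?_ (fun i => congrFun hrστ i) j
          rw [hσ.2, hτ.2]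
        have hinj₂ : Set.InjOn r S₂ := by
          intro σ hσ τ hτ hrστ
          simp only [hS₂, Finset.mem_filter, Finset.coe_filter, Set.mem_setOf_eq] at hσ hτ
          funext j
          refine Fin.lastCases ?_ (fun i => congrFun hrστ i) j
          rw [hσ.2, hτ.2]
        -- doubly–covered patterns live on the hyperplane
        have hinter : (S₁.image r) ∩ (S₂.image r) ⊆ Pats M := by
          intro σ' hσ'
          simp only [Finset.mem_inter, Finset.mem_image] at hσ'
          obtain ⟨⟨σm, hσm, hσm'⟩, ⟨σp, hσp, hσp'⟩⟩ := hσ'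
          simp only [hS₁, hS₂, Finset.mem_filter] at hσm hσp
          obtain ⟨θm, hθm⟩ := mem_Pats.mp hσm.1
          obtain ⟨θp, hθp⟩ := mem_Pats.mp hσp.1
          have hxm : L j₀ θm < 0 := (hθm j₀).mpr hσm.2
          have hxp : ¬ L j₀ θp < 0 := fun h => by
            have := (hθp j₀).mp h; rw [hσp.2] at this; exact Bool.false_ne_true this
          push_neg at hxp
          set x := L j₀ θm
          set y := L j₀ θp
          set s := x / (x - y) with hsdef
          have hxy : x - y < 0 := by simp only [x, y] at hxm hxp ⊢; linarith
          have hs0 : 0 ≤ s := by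
            rw [hsdef]; exact div_nonneg_iff.mpr (Or.inr ⟨le_of_lt hxm, le_of_lt hxy⟩)
          have hs1 : s ≤ 1 := by
            rw [hsdef, div_le_one_of_neg hxy]; simp only [x, y] at hxp ⊢; linarith
          set θ₀ : Fin (d+1) → ℝ := fun i => θm i + s * (θp i - θm i) with hθ₀
          have hL0 : L j₀ θ₀ = 0 := by
            rw [hθ₀, (hL j₀).segment θm θp s]
            show x + s * (y - x) = 0
            rw [hsdef]
            have hne : x - y ≠ 0 := ne_of_lt hxy
            field_simp
            ring
          have hmatch : ∀ j : Fin K, (L j.castSucc θ₀ < 0 ↔ σ' j = true) := by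
            intro j
            have hseg := (hL j.castSucc).segment θm θp s
            rw [← hθ₀] at hseg
            by_cases hσ'j : σ' j = true
            · have h1 : L j.castSucc θm < 0 := (hθm j.castSucc).mpr (by
                rw [← hσm']  at hσ'j; exact hσ'j)
              have h2 : L j.castSucc θp < 0 := (hθp j.castSucc).mpr (by
                rw [← hσp'] at hσ'j; exact hσ'j)
              constructor
              · intro _; exact hσ'j
              · intro _
                rw [hseg]
                rcases lt_or_eq_of_le hs1 with hlt | heq
                · nlinarith [mul_pos (sub_pos.mpr hlt) (neg_pos.mpr h1),
                    mul_nonneg hs0 (neg_nonneg.mpr h2.le)]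
                · rw [heq]; linarith
            · have hb : σ' j = false := by simpa using hσ'j
              have h1 : ¬ L j.castSucc θm < 0 := fun h => by
                have := (hθm j.castSucc).mp h
                rw [← hσm'] at hb; simp only [hr, Function.comp_apply] at hb
                rw [hb] at this; exact Bool.false_ne_true this
              have h2 : ¬ L j.castSucc θp < 0 := fun h => by
                have := (hθp j.castSucc).mp h
                rw [← hσp'] at hb; simp only [hr, Function.comp_apply] at hb
                rw [hb] at this; exact Bool.false_ne_true this
              push_neg at h1 h2
              constructor
              · intro h; exfalso; rw [hseg] at h
                nlinarith [mul_nonneg (sub_nonneg.mpr hs1) h1, mul_nonneg hs0 h2]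
              · intro h; exact absurd h hσ'j
          refine mem_Pats.mpr ⟨i₀.removeNth θ₀, fun j => ?_⟩
          show Lf j (e (i₀.removeNth θ₀)) < 0 ↔ σ' j = true
          rw [hsect θ₀ hL0]
          exact hmatch j
        have hcards : S₁.card + S₂.card
            = ((S₁.image r) ∪ (S₂.image r)).card + ((S₁.image r) ∩ (S₂.image r)).card := by
          rw [Finset.card_union_add_card_inter,
            Finset.card_image_of_injOn hinj₁, Finset.card_image_of_injOn hinj₂]
        have hUsub : (S₁.image r) ∪ (S₂.image r) ⊆ Pats Lf := by
          refine Finset.union_subset ?_ ?_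
          · exact hfront S₁ (Finset.filter_subset _ _)
          · exact hfront S₂ (Finset.filter_subset _ _)
        calc S.card = S₁.card + S₂.card := hsplit
          _ = ((S₁.image r) ∪ (S₂.image r)).card + ((S₁.image r) ∩ (S₂.image r)).card := hcards
          _ ≤ (K + 1) ^ (d + 1) + (K + 1) ^ d := by
              gcongr
              · exact (Finset.card_le_card hUsub).trans (ihK Lf hLfaff)
              · exact (Finset.card_le_card hinter).trans (ihd K M hMaff)
          _ ≤ (K + 1 + 1) ^ (d + 1) := by
              have : (K + 1 + 1) ^ (d + 1) = (K + 1 + 1) * (K + 1 + 1) ^ d := by ring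
              have h2 : (K + 1) ^ (d + 1) = (K + 1) * (K + 1) ^ d := by ring
              rw [this, h2]
              have := Nat.pow_le_pow_left (show K + 1 ≤ K + 1 + 1 by omega) d
              nlinarith

open Classical in
/-- The patterns realized by a family of affine functionals indexed by an arbitrary type. -/
def PatsJ {d : ℕ} {J : Type*} [Fintype J] (L : J → (Fin d → ℝ) → ℝ) : Finset (J → Bool) :=
  Finset.univ.filter fun σ => ∃ θ, ∀ j, (L j θ < 0 ↔ σ j = true)

lemma mem_PatsJ {d : ℕ} {J : Type*} [Fintype J] {L : J → (Fin d → ℝ) → ℝ} {σ : J → Bool} :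
    σ ∈ PatsJ L ↔ ∃ θ, ∀ j, (L j θ < 0 ↔ σ j = true) := by
  classical simp [PatsJ]

lemma patsJ_card {J : Type*} [Fintype J] {d : ℕ} (L : J → (Fin d → ℝ) → ℝ)
    (hL : ∀ j, IsAff (L j)) : (PatsJ L).card ≤ (Fintype.card J + 1) ^ d := by
  classical
  set e := Fintype.equivFin J with he
  have hinj : Set.InjOn (fun σ : J → Bool => σ ∘ e.symm) (PatsJ L) := by
    intro σ _ τ _ h
    funext j
    have := congrFun h (e j)
    simpa using this
  have hmaps : (PatsJ L).image (fun σ => σ ∘ e.symm) ⊆ Pats (fun k => L (e.symm k)) := by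
    intro σ' h
    obtain ⟨σ, hσ, rfl⟩ := Finset.mem_image.mp h
    obtain ⟨θ, hθ⟩ := mem_PatsJ.mp hσ
    exact mem_Pats.mpr ⟨θ, fun k => hθ (e.symm k)⟩
  calc (PatsJ L).card = ((PatsJ L).image (fun σ => σ ∘ e.symm)).card :=
        (Finset.card_image_of_injOn hinj).symm
    _ ≤ (Pats fun k => L (e.symm k)).card := Finset.card_le_card hmaps
    _ ≤ (Fintype.card J + 1) ^ d := pats_card d _ _ fun k => hL (e.symm k)

/-- The lifted affine comparison functionals for nearest–neighbor representations. -/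
def LNN (n m : ℕ) : ((Fin n → Bool) × Fin m × Fin m) → (Fin (m * (n + 1)) → ℝ) → ℝ :=
  fun q θ =>
    (θ (finProdFinEquiv (q.2.1, Fin.last n)) - θ (finProdFinEquiv (q.2.2, Fin.last n)))
    + ∑ i : Fin n, 2 * boolToR (q.1 i) *
        (θ (finProdFinEquiv (q.2.2, i.castSucc)) - θ (finProdFinEquiv (q.2.1, i.castSucc)))

lemma LNN_isAff (n m : ℕ) (q : (Fin n → Bool) × Fin m × Fin m) : IsAff (LNN n m q) :=
  ((isAff_coord _).sub (isAff_coord _)).add (isAff_sum _ _ fun i _ =>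
    ((isAff_coord _).sub (isAff_coord _)).const_mul _)

open Classical in
/-- Decoding a Boolean function from labels and a sign pattern. -/
def decodeNN (n m : ℕ) (lab : Fin m → Bool) (σ : ((Fin n → Bool) × Fin m × Fin m) → Bool) :
    (Fin n → Bool) → Bool :=
  fun a => decide (∃ j, lab j = true ∧ ∀ k, lab k = false → σ (a, j, k) = true)

lemma toPoint_injective {n : ℕ} : Function.Injective (toPoint (n := n)) := by
  intro a b h
  funext i
  have := congrArg (fun p : EuclideanSpace ℝ (Fin n) => p i) h
  simp only [toPoint, boolToR] at this
  cases ha : a i <;> cases hb : b i <;> rw [ha, hb] at this <;> simp_all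

lemma exists_NNRep {n : ℕ} (f : (Fin n → Bool) → Bool) :
    ∃ P N, IsNNRep f P N ∧ (P ∪ N).card = NN f := by
  classical
  have hne : {m | ∃ P N, IsNNRep f P N ∧ (P ∪ N).card = m}.Nonempty := by
    refine ⟨_, Finset.image toPoint (Finset.univ.filter fun a => f a = true),
      Finset.image toPoint (Finset.univ.filter fun a => f a = false), ⟨?_, ?_⟩, rfl⟩
    · rw [Finset.disjoint_left]
      intro q hq hq'
      simp only [Finset.mem_image, Finset.mem_filter, Finset.mem_univ, true_and] at hq hq'
      obtain ⟨a, ha, rfl⟩ := hq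
      obtain ⟨b, hb, hba⟩ := hq'
      cases toPoint_injective hba
      rw [ha] at hb
      exact Bool.false_ne_true hb.symm
    · intro a
      constructor
      · intro hfa
        refine ⟨toPoint a, ?_, ?_⟩
        · exact Finset.mem_image.mpr ⟨a, by simp [hfa], rfl⟩
        · intro c hc
          simp only [Finset.mem_image, Finset.mem_filter, Finset.mem_univ, true_and] at hc
          obtain ⟨b, hb, rfl⟩ := hc
          have hab : toPoint a ≠ toPoint b := fun h => by
            cases toPoint_injective h; rw [hfa] at hb; exact Bool.false_ne_true hb.symm
          rw [dist_self]
          exact dist_pos.mpr hab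
      · intro hfa
        refine ⟨toPoint a, ?_, ?_⟩
        · exact Finset.mem_image.mpr ⟨a, by simp [hfa], rfl⟩
        · intro c hc
          simp only [Finset.mem_image, Finset.mem_filter, Finset.mem_univ, true_and] at hc
          obtain ⟨b, hb, rfl⟩ := hc
          have hab : toPoint a ≠ toPoint b := fun h => by
            cases toPoint_injective h; rw [hfa] at hb; exact Bool.false_ne_true hb
          rw [dist_self]
          exact dist_pos.mpr hab
  exact Nat.sInf_mem hne

lemma rep_union_nonempty {n : ℕ} {f : (Fin n → Bool) → Bool}
    {P N : Finset (EuclideanSpace ℝ (Fin n))} (h : IsNNRep f P N) : (P ∪ N).Nonempty := by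
  rcases Bool.eq_false_or_eq_true (f fun _ => false) with hf | hf
  · obtain ⟨b, hb, -⟩ := (h.2 _).1 hf
    exact ⟨b, Finset.mem_union_left _ hb⟩
  · obtain ⟨b, hb, -⟩ := (h.2 _).2 hf
    exact ⟨b, Finset.mem_union_right _ hb⟩

open Classical in
lemma count_NN_le (n m : ℕ) :
    (Finset.univ.filter fun f : (Fin n → Bool) → Bool => NN f ≤ m).card
      ≤ (2 ^ n * (m * m) + 1) ^ (m * (n + 1)) * 2 ^ m := by
  classical
  have hsub : (Finset.univ.filter fun f : (Fin n → Bool) → Bool => NN f ≤ m)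
      ⊆ (PatsJ (LNN n m) ×ˢ (Finset.univ : Finset (Fin m → Bool))).image
          (fun q => decodeNN n m q.2 q.1) := by
    intro f hf
    simp only [Finset.mem_filter, Finset.mem_univ, true_and] at hf
    obtain ⟨P, N, hrep, hcard⟩ := exists_NNRep f
    have hcm : (P ∪ N).card ≤ m := hcard ▸ hf
    obtain ⟨x₀, hx₀⟩ := rep_union_nonempty hrep
    set l := (P ∪ N).toList with hl
    have hlen : l.length = (P ∪ N).card := Finset.length_toList _
    have hpos : 0 < l.length := by rw [hlen]; exact Finset.card_pos.mpr ⟨x₀, hx₀⟩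
    set p : Fin m → EuclideanSpace ℝ (Fin n) :=
      fun j => l.get ⟨j % l.length, Nat.mod_lt _ hpos⟩ with hp
    have hpmem : ∀ j, p j ∈ P ∪ N := fun j => Finset.mem_toList.mp (l.get_mem _)
    have hsurj : ∀ x ∈ P ∪ N, ∃ j : Fin m, p j = x := by
      intro x hx
      obtain ⟨idx, hidx⟩ := List.mem_iff_get.mp (Finset.mem_toList.mpr hx)
      refine ⟨⟨idx, lt_of_lt_of_le idx.2 (hlen ▸ hcm)⟩, ?_⟩
      have hmod : (idx : ℕ) % l.length = (idx : ℕ) := Nat.mod_eq_of_lt idx.2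
      rw [hp]
      exact (congrArg l.get (Fin.ext hmod)).trans hidx
    set lab : Fin m → Bool := fun j => decide (p j ∈ P) with hlab
    have hPl : ∀ j, lab j = true → p j ∈ P := by
      intro j h; rw [hlab] at h; exact of_decide_eq_true h
    have hNl : ∀ j, lab j = false → p j ∈ N := by
      intro j h
      have hnp : p j ∉ P := by rw [hlab] at h; exact of_decide_eq_false h
      rcases Finset.mem_union.mp (hpmem j) with h' | h'
      · exact absurd h' hnp
      · exact h'
    have hPsurj : ∀ x ∈ P, ∃ j, lab j = true ∧ p j = x := by
      intro x hx
      obtain ⟨j, hj⟩ := hsurj x (Finset.mem_union_left _ hx)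
      exact ⟨j, by simp only [hlab]; rw [hj]; exact decide_eq_true hx, hj⟩
    have hNsurj : ∀ x ∈ N, ∃ j, lab j = false ∧ p j = x := by
      intro x hx
      obtain ⟨j, hj⟩ := hsurj x (Finset.mem_union_right _ hx)
      have : x ∉ P := Finset.disjoint_right.mp hrep.1 hx
      exact ⟨j, by simp only [hlab]; rw [hj]; exact decide_eq_false this, hj⟩
    set θ : Fin (m * (n + 1)) → ℝ := fun i' =>
      Fin.lastCases (motive := fun _ => ℝ) (∑ i, p (finProdFinEquiv.symm i').1 i ^ 2)
        (fun i => p (finProdFinEquiv.symm i').1 i) (finProdFinEquiv.symm i').2 with hθdef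
    have hθlast : ∀ j : Fin m, θ (finProdFinEquiv (j, Fin.last n)) = ∑ i, p j i ^ 2 := by
      intro j; rw [hθdef]; simp
    have hθcast : ∀ (j : Fin m) (i : Fin n), θ (finProdFinEquiv (j, i.castSucc)) = p j i := by
      intro j i; rw [hθdef]; simp
    have hkey : ∀ (a : Fin n → Bool) (j k : Fin m),
        (LNN n m (a, j, k) θ < 0 ↔ dist (toPoint a) (p j) < dist (toPoint a) (p k)) := by
      intro a j k
      have hL : LNN n m (a, j, k) θ
          = ∑ i, ((boolToR (a i) - p j i) ^ 2 - (boolToR (a i) - p k i) ^ 2) := by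
        simp only [LNN, hθlast, hθcast]
        rw [← Finset.sum_sub_distrib, ← Finset.sum_add_distrib]
        exact Finset.sum_congr rfl fun i _ => by ring
      have h1 : ∀ q : EuclideanSpace ℝ (Fin n),
          (0:ℝ) ≤ ∑ i, dist (toPoint a i) (q i) ^ 2 :=
        fun q => Finset.sum_nonneg fun i _ => sq_nonneg _
      have hdist : ∀ q : Fin m,
          (∑ i, dist (toPoint a i) (p q i) ^ 2) = ∑ i, (boolToR (a i) - p q i) ^ 2 := by
        intro q
        refine Finset.sum_congr rfl fun i _ => ?_
        rw [Real.dist_eq, sq_abs]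
        rfl
      rw [hL, Finset.sum_sub_distrib, sub_neg, EuclideanSpace.dist_eq, EuclideanSpace.dist_eq,
        Real.sqrt_lt_sqrt_iff (h1 _), hdist j, hdist k]
    set σ : ((Fin n → Bool) × Fin m × Fin m) → Bool :=
      fun q => decide (LNN n m q θ < 0) with hσdef
    have hσmem : σ ∈ PatsJ (LNN n m) :=
      mem_PatsJ.mpr ⟨θ, fun q => by rw [hσdef]; simp⟩
    refine Finset.mem_image.mpr ⟨(σ, lab), Finset.mem_product.mpr ⟨hσmem, Finset.mem_univ _⟩, ?_⟩
    funext a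
    rcases Bool.eq_false_or_eq_true (f a) with hfa | hfa
    case _ =>
      obtain ⟨b, hbP, hb⟩ := (hrep.2 a).1 hfa
      obtain ⟨j, hjl, hjp⟩ := hPsurj b hbP
      rw [hfa, decodeNN, decide_eq_true_iff]
      refine ⟨j, hjl, fun k hk => ?_⟩
      have hd : dist (toPoint a) (p j) < dist (toPoint a) (p k) := by
        rw [hjp]; exact hb _ (hNl k hk)
      rw [hσdef]
      exact decide_eq_true ((hkey a j k).mpr hd)
    · obtain ⟨b, hbN, hb⟩ := (hrep.2 a).2 hfa
      obtain ⟨k₀, hk₀l, hk₀p⟩ := hNsurj b hbN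
      rw [hfa, decodeNN, decide_eq_false_iff_not]
      rintro ⟨j, hjt, hjk⟩
      have hσjk : σ (a, j, k₀) = true := hjk k₀ hk₀l
      rw [hσdef] at hσjk
      have h1 : dist (toPoint a) (p j) < dist (toPoint a) (p k₀) :=
        (hkey a j k₀).mp (of_decide_eq_true hσjk)
      have h2 : dist (toPoint a) b < dist (toPoint a) (p j) := hb _ (hPl j hjt)
      rw [hk₀p] at h1
      exact lt_asymm h1 h2
  calc (Finset.univ.filter fun f : (Fin n → Bool) → Bool => NN f ≤ m).card
      ≤ ((PatsJ (LNN n m) ×ˢ (Finset.univ : Finset (Fin m → Bool))).image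
          (fun q => decodeNN n m q.2 q.1)).card := Finset.card_le_card hsub
    _ ≤ (PatsJ (LNN n m) ×ˢ (Finset.univ : Finset (Fin m → Bool))).card :=
        Finset.card_image_le
    _ = (PatsJ (LNN n m)).card * 2 ^ m := by
        rw [Finset.card_product]
        congr 1
        simp [Fintype.card_fun]
    _ ≤ (2 ^ n * (m * m) + 1) ^ (m * (n + 1)) * 2 ^ m := by
        have h := patsJ_card (LNN n m) (LNN_isAff n m)
        rw [Fintype.card_prod, Fintype.card_prod, Fintype.card_fun, Fintype.card_bool,
          Fintype.card_fin, Fintype.card_fin] at h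
        exact Nat.mul_le_mul_right _ h

lemma nat_sq_bound : ∀ n : ℕ, 20 ≤ n → 144 * n ^ 2 ≤ 2 ^ n := by
  intro n hn
  induction n, hn using Nat.le_induction with
  | base => norm_num
  | succ n hn ih =>
    have h1 : 144 * (n + 1) ^ 2 ≤ 2 * (144 * n ^ 2) := by nlinarith
    calc 144 * (n + 1) ^ 2 ≤ 2 * (144 * n ^ 2) := h1
      _ ≤ 2 * 2 ^ n := by omega
      _ = 2 ^ (n + 1) := by ring

open Classical in
lemma key_fraction_bound (n : ℕ) (hn : 20 ≤ n) :
    ((Finset.univ.filter (fun f : (Fin n → Bool) → Bool =>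
        (NN f : ℝ) ≤ 2 ^ ((n : ℝ) / 2) / n)).card : ℝ) / 2 ^ (2 ^ n) ≤ (1 / 2 : ℝ) ^ n := by
  classical
  set m := Nat.floor ((2 : ℝ) ^ ((n : ℝ) / 2) / n) with hm
  set X := (2 : ℝ) ^ ((n : ℝ) / 2) with hXdef
  have hnR : (0 : ℝ) < n := by
    have : (20 : ℝ) ≤ n := by exact_mod_cast hn
    linarith
  have h2n : (20 : ℝ) ≤ n := by exact_mod_cast hn
  have hnR1 : (1 : ℝ) ≤ n := by linarith
  have hXpos : 0 < X := Real.rpow_pos_of_pos (by norm_num) _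
  have hX2 : X ^ 2 = (2 : ℝ) ^ (n : ℕ) := by
    rw [hXdef, ← Real.rpow_natCast ((2 : ℝ) ^ ((n : ℝ) / 2)) 2,
      ← Real.rpow_mul (by norm_num : (0 : ℝ) ≤ 2)]
    rw [show (n : ℝ) / 2 * ((2 : ℕ) : ℝ) = (n : ℝ) by push_cast; ring]
    exact Real.rpow_natCast 2 n
  have hmX : (m : ℝ) ≤ X / n := Nat.floor_le (by positivity)
  have hmX' : (m : ℝ) ≤ X := hmX.trans (div_le_self hXpos.le hnR1)
  have h144R : (144 : ℝ) * n ^ 2 ≤ X ^ 2 := by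
    rw [hX2]
    exact_mod_cast nat_sq_bound n hn
  have h12 : (12 : ℝ) * n ≤ X := by
    have hsq : ((12 : ℝ) * n) ^ 2 ≤ X ^ 2 := by nlinarith
    exact le_of_pow_le_pow_left₀ (by norm_num) hXpos.le hsq
  have hm2 : (m * m : ℕ) ≤ 2 ^ n := by
    have h1 : (m : ℝ) * m ≤ X * X := mul_le_mul hmX' hmX' (by positivity) hXpos.le
    have hXX : X * X = ((2 ^ n : ℕ) : ℝ) := by rw [← sq, hX2]; push_cast; ring
    rw [hXX] at h1
    exact_mod_cast h1
  set Q : ℕ := 1 + (2 * n + 1) * (n + 1) with hQ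
  have hEn : (m * Q + n : ℕ) ≤ 2 ^ n := by
    have hQ6 : (Q : ℝ) ≤ 6 * n ^ 2 := by rw [hQ]; push_cast; nlinarith
    have hmQ : (m : ℝ) * Q ≤ X * X / 2 := by
      calc (m : ℝ) * Q ≤ (X / n) * (6 * n ^ 2) :=
            mul_le_mul hmX hQ6 (by positivity) (by positivity)
        _ = (6 * n) * X := by field_simp
        _ ≤ (X / 2) * X := by
            have h6 : (6 : ℝ) * n ≤ X / 2 := by linarith
            exact mul_le_mul_of_nonneg_right h6 hXpos.le
        _ = X * X / 2 := by ring
    have hnX : (n : ℝ) ≤ X * X / 2 := by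
      have ha : (2 : ℝ) * n ≤ 144 * n ^ 2 := by nlinarith
      have hb : (144 : ℝ) * n ^ 2 ≤ X * X := by rw [← sq]; exact h144R
      linarith
    have hfin : (m : ℝ) * Q + n ≤ X * X := by linarith
    rw [← sq, hX2] at hfin
    exact_mod_cast hfin
  have hsubset : (Finset.univ.filter (fun f : (Fin n → Bool) → Bool =>
        (NN f : ℝ) ≤ 2 ^ ((n : ℝ) / 2) / n))
      ⊆ Finset.univ.filter (fun f : (Fin n → Bool) → Bool => NN f ≤ m) := by
    intro f hf
    simp only [Finset.mem_filter, Finset.mem_univ, true_and] at hf ⊢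
    exact Nat.le_floor hf
  have hcount : (Finset.univ.filter (fun f : (Fin n → Bool) → Bool =>
        (NN f : ℝ) ≤ 2 ^ ((n : ℝ) / 2) / n)).card ≤ 2 ^ (m * Q) := by
    calc (Finset.univ.filter (fun f : (Fin n → Bool) → Bool =>
            (NN f : ℝ) ≤ 2 ^ ((n : ℝ) / 2) / n)).card
        ≤ (Finset.univ.filter (fun f : (Fin n → Bool) → Bool => NN f ≤ m)).card :=
          Finset.card_le_card hsubset
      _ ≤ (2 ^ n * (m * m) + 1) ^ (m * (n + 1)) * 2 ^ m := count_NN_le n m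
      _ ≤ (2 ^ (2 * n + 1)) ^ (m * (n + 1)) * 2 ^ m := by
          gcongr
          calc 2 ^ n * (m * m) + 1 ≤ 2 ^ n * 2 ^ n + 2 ^ n := by
                have h1 : (1 : ℕ) ≤ 2 ^ n := Nat.one_le_two_pow
                have := Nat.mul_le_mul_left (2 ^ n) hm2
                omega
            _ ≤ 2 ^ (2 * n + 1) := by
                have h1 : 2 ^ n * 2 ^ n = 2 ^ (2 * n) := by rw [← pow_add]; ring_nf
                have hle : (2 : ℕ) ^ n ≤ 2 ^ (2 * n) :=
                  Nat.pow_le_pow_right (by norm_num) (by omega)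
                have h3 : (2 : ℕ) ^ (2 * n + 1) = 2 ^ (2 * n) + 2 ^ (2 * n) := by
                  rw [pow_succ]; ring
                omega
      _ = 2 ^ (m * Q) := by
          rw [← pow_mul, ← pow_add]
          congr 1
          rw [hQ]; ring
  have h2pos : (0 : ℝ) < 2 ^ (2 ^ n) := by positivity
  rw [div_le_iff₀ h2pos]
  have hrw : ((1 : ℝ) / 2) ^ n * 2 ^ (2 ^ n) = 2 ^ (2 ^ n) / 2 ^ n := by
    rw [div_pow, one_pow]; ring
  rw [hrw, le_div_iff₀ (by positivity)]
  have hnat : 2 ^ (m * Q) * 2 ^ n ≤ 2 ^ (2 ^ n) := by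
    rw [← pow_add]
    exact Nat.pow_le_pow_right (by norm_num) hEn
  calc ((Finset.univ.filter (fun f : (Fin n → Bool) → Bool =>
          (NN f : ℝ) ≤ 2 ^ ((n : ℝ) / 2) / n)).card : ℝ) * 2 ^ n
      ≤ (2 : ℝ) ^ (m * Q) * 2 ^ n := by
        gcongr
        exact_mod_cast hcount
    _ ≤ 2 ^ (2 ^ n) := by exact_mod_cast hnat

open Classical in
/-- Almost all `n`-variable Boolean functions `f` satisfy
`NN(f) > 2^(n/2) / n`: the fraction of `f : {0,1}^n → {0,1}` with
`NN(f) ≤ 2^(n/2) / n`, among all `2^(2^n)` Boolean functions, tends to `0`. -/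
theorem NN_lower_almost_all :
    Filter.Tendsto (fun n : ℕ =>
      ((Finset.univ.filter (fun f : (Fin n → Bool) → Bool =>
          (NN f : ℝ) ≤ 2 ^ ((n : ℝ) / 2) / n)).card : ℝ) / 2 ^ (2 ^ n))
      Filter.atTop (nhds 0) := by
  refine squeeze_zero' ?_ ?_
    (tendsto_pow_atTop_nhds_zero_of_lt_one (by norm_num) (by norm_num : (1/2 : ℝ) < 1))
  · exact Filter.Eventually.of_forall fun n => by positivity
  · exact Filter.eventually_atTop.mpr ⟨20, key_fraction_bound⟩
end
end
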